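/- Let p₁ < p₂ < ⋯ < p_K ≤ 1 be an ℓ-dense sequence (p₁ ≤ ℓ/K, p_K ≥ 1−ℓ/K, and p_{i+1}−p_i ≤ ℓ/K for all i) with K ≥ 6ℓ. Then p_{T*} > 5/21, where T* is the starting point of the coinciding equilibrium of the associated symmetric stingy quantum race. In particular T* ≥ 2. -/

import Mathlib

open Finset

noncomputable def auxH (t : ℝ) : ℝ := (max (1 - 2*t) 0) * (8 - 11*t + 5*t^2) / (10*t)

set_option maxHeartbeats 1000000 in
lemma auxA (a b d : ℝ) (ha : 0 < a) (hab : a < b) (hd : b - a ≤ d)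
    (hb : b ≤ 1 - 2*d) (hd6 : d ≤ 1/6) :
    auxH a - auxH b ≤ (1 - b)*(b - a)/(a*b^2) := by
  have hbpos : 0 < b := ha.trans hab
  have hdpos : 0 < d := by linarith
  have hb1 : b < 1 := by linarith
  rcases le_or_gt b (1/2) with hbh | hbh
  · -- both a, b ≤ 1/2
    have hah : a < 1/2 := lt_of_lt_of_le hab hbh
    rw [auxH, auxH, max_eq_left (by linarith), max_eq_left (by linarith)]
    have key : (1 - b)*(b - a)/(a*b^2) -
        ((1 - 2*a) * (8 - 11*a + 5*a^2) / (10*a) - (1 - 2*b) * (8 - 11*b + 5*b^2) / (10*b))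
        = (b - a) * (10 - 18*b + a*b^2*(27 - 10*b - 10*a)) / (10*a*b^2) := by
      field_simp
      ring
    have h1 : 0 ≤ (b - a) * (10 - 18*b + a*b^2*(27 - 10*b - 10*a)) / (10*a*b^2) := by
      apply div_nonneg _ (by positivity)
      apply mul_nonneg (by linarith)
      nlinarith [mul_pos ha hbpos, sq_nonneg b, mul_pos (mul_pos ha hbpos) hbpos]
    linarith [key ▸ h1]
  · rcases lt_or_ge a (1/2) with hah | hah
    · -- a < 1/2 < b : auxH b = 0
      have hb0 : auxH b = 0 := by
        rw [auxH, max_eq_right (by linarith), zero_mul, zero_div]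
      have ha13 : 1/3 ≤ a := by linarith
      have h3b : 3*b ≤ 1 + 2*a := by linarith
      have hba6 : b - a ≤ 1/6 := by linarith
      rw [hb0, auxH, max_eq_left (by linarith), sub_zero]
      have key : (1 - b)*(b - a)/(a*b^2) - (1 - 2*a) * (8 - 11*a + 5*a^2) / (10*a)
          = (10*(1-b)*(b-a) - b^2*(1-2*a)*(8-11*a+5*a^2)) / (10*a*b^2) := by
        field_simp
      have hu : (0:ℝ) ≤ 1/2 - a := by linarith
      have hv : (0:ℝ) ≤ b - 1/2 := by linarith
      have hw : (0:ℝ) ≤ 1/6 - (b - a) := by linarith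
      have hu6 : (1/2 - a : ℝ) ≤ 1/6 := by linarith
      have hv6 : (b - 1/2 : ℝ) ≤ 1/6 := by linarith
      have hQ2 : 0 ≤ 10*(1-b)*(b-a) - b^2*(1-2*a)*(8-11*a+5*a^2) := by
        nlinarith [mul_nonneg hv hw, mul_nonneg hu hw, mul_nonneg hu hv,
          mul_nonneg (mul_nonneg hu hu) hv, mul_nonneg (mul_nonneg hu hv) hv,
          mul_nonneg (mul_nonneg hu hu) hu,
          mul_nonneg (mul_nonneg (mul_nonneg hu hu) hv) hv,
          mul_nonneg hu hu, mul_nonneg hv hv]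
      have h1 : 0 ≤ (10*(1-b)*(b-a) - b^2*(1-2*a)*(8-11*a+5*a^2)) / (10*a*b^2) :=
        div_nonneg hQ2 (by positivity)
      linarith [key ▸ h1]
    · -- both ≥ 1/2 : both zero
      have ha0 : auxH a = 0 := by
        rw [auxH, max_eq_right (by linarith), zero_mul, zero_div]
      have hb0 : auxH b = 0 := by
        rw [auxH, max_eq_right (by linarith), zero_mul, zero_div]
      rw [ha0, hb0, sub_zero]
      apply div_nonneg (mul_nonneg (by linarith) (by linarith)) (by positivity)

lemma auxHlb (x : ℝ) (hx : 0 < x) (hx2 : x ≤ 5/21) : 6/5 ≤ auxH x := by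
  rw [auxH, max_eq_left (by linarith)]
  rw [le_div_iff₀ (by positivity)]
  nlinarith [sq_nonneg x, hx.le]

lemma auxTele (f : ℕ → ℝ) (T M : ℕ) (h : T ≤ M) :
    ∑ i ∈ Finset.Icc (T+1) M, (f (i-1) - f i) = f T - f M := by
  induction M, h using Nat.le_induction with
  | base => simp
  | succ n hn ih =>
    rw [Finset.sum_Icc_succ_top (by omega : T+1 ≤ n+1), ih]
    simp only [Nat.add_sub_cancel]
    ring

theorem stmt_8 (K : ℕ) (ℓ : ℝ) (p q r : ℕ → ℝ) (Tstar : ℕ)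
    (hK : 2 ≤ K)
    (hp1 : 0 < p 1) (hpK : p K ≤ 1)
    (hpmono : ∀ i j, 1 ≤ i → i < j → j ≤ K → p i < p j)
    (hℓ : 0 < ℓ)
    (hdense1 : p 1 ≤ ℓ / K)
    (hdense2 : p K ≥ 1 - ℓ / K)
    (hdense3 : ∀ i, 1 ≤ i → i ≤ K - 1 → p (i+1) - p i ≤ ℓ / K)
    (hK6 : 6 * ℓ ≤ (K : ℝ))
    (hq : ∀ i, q i = (1 / p i) * (1 / p (i-1) - 1 / p i))
    (hr : ∀ T, r T = (1 / (1 - p T)) *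
      (1 / p K - ∑ i ∈ Finset.Icc (T+1) K, (1 - p i) * q i))
    (hT1 : 1 ≤ Tstar) (hT2 : Tstar ≤ K) (hT3 : 0 < r Tstar)
    (hT4 : ∀ T, 1 ≤ T → T < Tstar → r T ≤ 0) :
    p Tstar > 5 / 21 ∧ 2 ≤ Tstar := by
  classical
  have hKpos : (0:ℝ) < K := by positivity
  set d : ℝ := ℓ / K with hddef
  have hdpos : 0 < d := div_pos hℓ hKpos
  have hd6 : d ≤ 1/6 := by
    rw [hddef, div_le_div_iff₀ hKpos (by norm_num)]
    linarith
  have ppos : ∀ i, 1 ≤ i → i ≤ K → 0 < p i := by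
    intro i h1 h2
    rcases eq_or_lt_of_le h1 with h | h
    · rwa [← h]
    · exact hp1.trans (hpmono 1 i le_rfl h h2)
  have pleq : ∀ i, 1 ≤ i → i ≤ K → p i ≤ 1 := by
    intro i h1 h2
    rcases eq_or_lt_of_le h2 with h | h
    · rw [h]; exact hpK
    · exact ((hpmono i K h1 h le_rfl).le).trans hpK
  have gap : ∀ i, 1 ≤ i → i < K → p (i+1) - p i ≤ d := by
    intro i h1 h2
    exact hdense3 i h1 (by omega)
  have key : p Tstar > 5 / 21 := by
    by_contra hcon
    push_neg at hcon
    -- Tstar < K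
    have hTK : Tstar < K := by
      rcases eq_or_lt_of_le hT2 with h | h
      · exfalso
        rw [h] at hcon
        linarith
      · exact h
    have hpTpos : 0 < p Tstar := ppos _ hT1 hT2
    have hpT1 : p Tstar < 1 := by linarith
    -- S < 1 / p K
    have h3 := hT3
    rw [hr Tstar] at h3
    have hS : ∑ i ∈ Finset.Icc (Tstar+1) K, (1 - p i) * q i < 1 / p K := by
      by_contra hcon2
      push_neg at hcon2
      have : (1 / (1 - p Tstar)) *
          (1 / p K - ∑ i ∈ Finset.Icc (Tstar+1) K, (1 - p i) * q i) ≤ 0 :=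
        mul_nonpos_of_nonneg_of_nonpos
          (le_of_lt (one_div_pos.2 (by linarith))) (by linarith)
      linarith
    -- define M
    set Sf : Finset ℕ := (Finset.Icc Tstar K).filter (fun i => p i ≤ 1 - 2*d) with hSf
    have hne : Sf.Nonempty := by
      refine ⟨Tstar, ?_⟩
      rw [hSf, Finset.mem_filter, Finset.mem_Icc]
      exact ⟨⟨le_rfl, hT2⟩, by linarith⟩
    set M : ℕ := Sf.max' hne with hMdef
    have hMmem : M ∈ Sf := Sf.max'_mem hne
    rw [hSf, Finset.mem_filter, Finset.mem_Icc] at hMmem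
    obtain ⟨⟨hTM0, hMK0⟩, hpM⟩ := hMmem
    have hMK : M < K := by
      rcases eq_or_lt_of_le hMK0 with h | h
      · exfalso; rw [h] at hpM; linarith
      · exact h
    have hM2 : ¬ (p (M+1) ≤ 1 - 2*d) := by
      intro hc
      have hmem : M + 1 ∈ Sf := by
        rw [hSf, Finset.mem_filter, Finset.mem_Icc]
        exact ⟨⟨by omega, by omega⟩, hc⟩
      have := Sf.le_max' (M+1) hmem
      omega
    push_neg at hM2
    have hpMlb : 1 - 3*d < p M := by
      have := gap M (by omega) hMK
      linarith
    have hpMhalf : 1/2 < p M := by linarith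
    have hTM : Tstar < M := by
      rcases eq_or_lt_of_le hTM0 with h | h
      · exfalso
        have hg := gap Tstar hT1 hTK
        rw [← h] at hM2
        linarith
      · exact h
    -- per-term bound
    have hstep : ∀ i ∈ Finset.Icc (Tstar+1) M,
        auxH (p (i-1)) - auxH (p i) ≤ (1 - p i) * q i := by
      intro i hi
      rw [Finset.mem_Icc] at hi
      have hi1 : 1 ≤ i - 1 := by omega
      have hiK : i ≤ K := by omega
      have ha : 0 < p (i-1) := ppos _ hi1 (by omega)
      have hab : p (i-1) < p i := hpmono (i-1) i hi1 (by omega) hiK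
      have hbpos : 0 < p i := ha.trans hab
      have hgap : p i - p (i-1) ≤ d := by
        have := gap (i-1) hi1 (by omega)
        rwa [Nat.sub_add_cancel (by omega)] at this
      have hple : p i ≤ 1 - 2*d := by
        rcases eq_or_lt_of_le hi.2 with h | h
        · rw [h]; exact hpM
        · exact le_trans (hpmono i M (by omega) h (by omega)).le hpM
      have hA := auxA (p (i-1)) (p i) d ha hab hgap hple hd6
      rw [hq i]
      have heq : (1 - p i) * ((1 / p i) * (1 / p (i-1) - 1 / p i))
          = (1 - p i) * (p i - p (i-1)) / (p (i-1) * (p i)^2) := by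
        have h1 : p (i-1) ≠ 0 := ha.ne'
        have h2 : p i ≠ 0 := hbpos.ne'
        field_simp
      rw [heq]
      exact hA
    have htele := auxTele (fun n => auxH (p n)) Tstar M hTM.le
    have hge1 : auxH (p Tstar) - auxH (p M) ≤
        ∑ i ∈ Finset.Icc (Tstar+1) M, (1 - p i) * q i := by
      rw [← htele]
      exact Finset.sum_le_sum hstep
    have hnonneg : ∀ i ∈ Finset.Icc (Tstar+1) K,
        i ∉ Finset.Icc (Tstar+1) M → 0 ≤ (1 - p i) * q i := by
      intro i hi _
      rw [Finset.mem_Icc] at hi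
      have hi1 : 1 ≤ i - 1 := by omega
      have ha : 0 < p (i-1) := ppos _ hi1 (by omega)
      have hab : p (i-1) < p i := hpmono (i-1) i hi1 (by omega) hi.2
      have hbpos : 0 < p i := ha.trans hab
      apply mul_nonneg
      · linarith [pleq i (by omega) hi.2]
      · rw [hq i]
        apply mul_nonneg (by positivity)
        have := one_div_le_one_div_of_le ha hab.le
        linarith
    have hsub : ∑ i ∈ Finset.Icc (Tstar+1) M, (1 - p i) * q i ≤
        ∑ i ∈ Finset.Icc (Tstar+1) K, (1 - p i) * q i :=
      Finset.sum_le_sum_of_subset_of_nonneg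
        (Finset.Icc_subset_Icc_right (by omega)) hnonneg
    have hHpM : auxH (p M) = 0 := by
      rw [auxH, max_eq_right (by linarith), zero_mul, zero_div]
    have hHpT : 6/5 ≤ auxH (p Tstar) := auxHlb _ hpTpos hcon
    have hpK56 : 5/6 ≤ p K := by linarith
    have hpKpos : 0 < p K := by linarith
    have hpKle : 1 / p K ≤ 6/5 := by
      rw [div_le_div_iff₀ hpKpos (by norm_num)]
      linarith
    linarith
  refine ⟨key, ?_⟩
  by_contra hcon
  push_neg at hcon
  have hT1' : Tstar = 1 := by omega
  rw [hT1'] at key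
  linarith
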